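/- Let G be a group, H ≤ G, and λ an ordinal. Then C_{E_λ(H)}^{α}(H) = Z_α(E_λ(H)) for all ordinals α ≤ λ, where E_λ(H) is the transfinite envelope and Z_α denotes the transfinite upper central series. -/

import Mathlib

open Ordinal

section Defs
variable {G : Type*} [Group G]

attribute [local instance] Classical.propDecidable

/-- The commutator `[x,y] = x⁻¹y⁻¹xy` as in the paper. -/
def pcomm (x y : G) : G := x⁻¹ * y⁻¹ * x * y

/-- Transfinite upper central series of the (sub)set `E` of `G`, viewed inside `G`. -/
noncomputable def ZSet (E : Set G) (α : Ordinal) : Set G :=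
  if α = 0 then {1}
  else if hs : ∃ β < α, α = β + 1 then
    {x | x ∈ E ∧ ∀ g ∈ E, pcomm x g ∈ ZSet E hs.choose}
  else ⋃ (β : Ordinal) (_ : β < α), ZSet E β
termination_by α
decreasing_by all_goals first | assumption | exact hs.choose_spec.1

/-- Transfinite iterated centralizers `C_E^α(H)` of `H` inside the ambient set `E ⊆ G`. -/
noncomputable def CIter (E H : Set G) (α : Ordinal) : Set G :=
  if α = 0 then {1}
  else if hs : ∃ β < α, α = β + 1 then
    {x | x ∈ E ∧ (∀ β < α, ∀ a : G, a ∈ CIter E H β ↔ x * a * x⁻¹ ∈ CIter E H β)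
       ∧ ∀ h ∈ H, pcomm x h ∈ CIter E H hs.choose}
  else ⋃ (β : Ordinal) (_ : β < α), CIter E H β
termination_by α
decreasing_by all_goals first | assumption | exact hs.choose_spec.1

/-- Transfinite envelopes `E_α(H)` of `H ⊆ G`. -/
noncomputable def Env (H : Set G) (α : Ordinal) : Set G :=
  if α = 0 then Set.univ
  else if hs : ∃ β < α, α = β + 1 then
    {g | g ∈ Env H hs.choose ∧
      ∀ c ∈ CIter (Env H hs.choose) H (hs.choose + 1),
        pcomm g c ∈ CIter (Env H hs.choose) H hs.choose}
  else ⋂ (β : Ordinal) (_ : β < α), Env H β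
termination_by α
decreasing_by all_goals first | assumption | exact hs.choose_spec.1

end Defs




section Unfold
variable {G : Type*} [Group G] (E H : Set G)

lemma succ_ex (β : Ordinal) : ∃ γ < β + 1, β + 1 = γ + 1 := ⟨β, Order.lt_succ β, rfl⟩

lemma succ_ex_choose (β : Ordinal) : (succ_ex β).choose = β := by
  have h := (succ_ex β).choose_spec.2
  have h2 : β = (succ_ex β).choose := by
    exact Order.succ_injective ((Ordinal.add_one_eq_succ _).symm.trans (h.trans (Ordinal.add_one_eq_succ _)))
  exact h2.symm

lemma isLimit_not_ex {α : Ordinal} (hl : Order.IsSuccLimit α) : ¬ ∃ β < α, α = β + 1 := by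
  rintro ⟨β, hβ, rfl⟩
  exact (hl.succ_lt hβ).ne (Ordinal.add_one_eq_succ β).symm

lemma ZSet_zero : ZSet E 0 = {1} := by rw [ZSet]; simp

lemma ZSet_succ (β : Ordinal) :
    ZSet E (β + 1) = {x | x ∈ E ∧ ∀ g ∈ E, pcomm x g ∈ ZSet E β} := by
  rw [ZSet]
  rw [if_neg (by rw [Ordinal.add_one_eq_succ]; exact Ordinal.succ_ne_zero β), dif_pos (succ_ex β), succ_ex_choose]

lemma ZSet_limit {α : Ordinal} (hl : Order.IsSuccLimit α) :
    ZSet E α = ⋃ (β : Ordinal) (_ : β < α), ZSet E β := by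
  rw [ZSet, if_neg hl.pos.ne', dif_neg (isLimit_not_ex hl)]

lemma CIter_zero : CIter E H 0 = {1} := by rw [CIter]; simp

lemma CIter_succ (β : Ordinal) :
    CIter E H (β + 1) = {x | x ∈ E ∧ (∀ δ < β + 1, ∀ a : G, a ∈ CIter E H δ ↔ x * a * x⁻¹ ∈ CIter E H δ)
       ∧ ∀ h ∈ H, pcomm x h ∈ CIter E H β} := by
  rw [CIter]
  rw [if_neg (by rw [Ordinal.add_one_eq_succ]; exact Ordinal.succ_ne_zero β), dif_pos (succ_ex β), succ_ex_choose]

lemma CIter_limit {α : Ordinal} (hl : Order.IsSuccLimit α) :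
    CIter E H α = ⋃ (β : Ordinal) (_ : β < α), CIter E H β := by
  rw [CIter, if_neg hl.pos.ne', dif_neg (isLimit_not_ex hl)]

lemma Env_zero : Env H 0 = (Set.univ : Set G) := by rw [Env]; simp

lemma Env_succ (β : Ordinal) :
    Env H (β + 1) = {g | g ∈ Env H β ∧
      ∀ c ∈ CIter (Env H β) H (β + 1), pcomm g c ∈ CIter (Env H β) H β} := by
  rw [Env]
  rw [if_neg (by rw [Ordinal.add_one_eq_succ]; exact Ordinal.succ_ne_zero β), dif_pos (succ_ex β), succ_ex_choose]

lemma Env_limit {α : Ordinal} (hl : Order.IsSuccLimit α) :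
    Env H α = ⋂ (β : Ordinal) (_ : β < α), Env H β := by
  rw [Env, if_neg hl.pos.ne', dif_neg (isLimit_not_ex hl)]

end Unfold

section Generic
variable {G : Type*} [Group G]

lemma pcomm_one_left (y : G) : pcomm 1 y = 1 := by simp [pcomm]
lemma pcomm_inv_pair (x y : G) : pcomm x y = (pcomm y x)⁻¹ := by simp [pcomm]; group
lemma pcomm_mul_left (x y z : G) : pcomm (x*y) z = y⁻¹ * pcomm x z * y * pcomm y z := by
  simp [pcomm]; group
lemma pcomm_inv_left (x z : G) : pcomm x⁻¹ z = (x * pcomm x z * x⁻¹)⁻¹ := by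
  simp [pcomm]; group
lemma pcomm_conj (g a e : G) : pcomm (g*a*g⁻¹) e = g * pcomm a (g⁻¹*e*g) * g⁻¹ := by
  simp [pcomm]; group

structure IsSubgroupSet (E : Set G) : Prop where
  one : (1:G) ∈ E
  mul : ∀ {a b : G}, a ∈ E → b ∈ E → a*b ∈ E
  inv : ∀ {a : G}, a ∈ E → a⁻¹ ∈ E

lemma IsSubgroupSet.conj_iff {E : Set G} (hE : IsSubgroupSet E) {g : G} (hg : g ∈ E) (a : G) :
    a ∈ E ↔ g * a * g⁻¹ ∈ E := by
  constructor
  · intro ha; exact hE.mul (hE.mul hg ha) (hE.inv hg)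
  · intro ha
    have : g⁻¹ * (g*a*g⁻¹) * g ∈ E := hE.mul (hE.mul (hE.inv hg) ha) hg
    simpa [mul_assoc] using this

lemma IsSubgroupSet.pcomm_mem {E : Set G} (hE : IsSubgroupSet E) {a b : G}
    (ha : a ∈ E) (hb : b ∈ E) : pcomm a b ∈ E :=
  hE.mul (hE.mul (hE.mul (hE.inv ha) (hE.inv hb)) ha) hb

lemma zset_conj_fwd {E : Set G} (hE : IsSubgroupSet E) :
    ∀ α : Ordinal, ∀ g ∈ E, ∀ a ∈ ZSet E α, g * a * g⁻¹ ∈ ZSet E α := by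
  intro α
  induction α using Ordinal.induction with
  | _ α IH =>
    rcases Ordinal.zero_or_succ_or_isSuccLimit α with rfl | ⟨β, rfl⟩ | hl
    · intro g hg a ha
      rw [ZSet_zero] at *
      simp only [Set.mem_singleton_iff] at *
      simp [ha]
    · rw [← Ordinal.add_one_eq_succ]
      intro g hg a ha
      rw [ZSet_succ] at *
      obtain ⟨haE, hcom⟩ := ha
      refine ⟨(hE.conj_iff hg a).mp haE, ?_⟩
      intro e he
      rw [pcomm_conj]
      exact IH β (Order.lt_succ β) g hg _
        (hcom _ (hE.mul (hE.mul (hE.inv hg) he) hg))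
    · intro g hg a ha
      rw [ZSet_limit E hl] at *
      simp only [Set.mem_iUnion] at *
      obtain ⟨β, hβ, ha⟩ := ha
      exact ⟨β, hβ, IH β hβ g hg a ha⟩

lemma zset_conj {E : Set G} (hE : IsSubgroupSet E) (α : Ordinal) {g : G} (hg : g ∈ E) (a : G) :
    a ∈ ZSet E α ↔ g * a * g⁻¹ ∈ ZSet E α := by
  constructor
  · exact zset_conj_fwd hE α g hg a
  · intro h
    have := zset_conj_fwd hE α g⁻¹ (hE.inv hg) _ h
    simpa [mul_assoc] using this

end Generic

section CProps
variable {G : Type*} [Group G]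

def CProps (E H : Set G) (α : Ordinal) : Prop :=
  (1 ∈ CIter E H α) ∧
  (CIter E H α ⊆ E) ∧
  (∀ x ∈ CIter E H α, ∀ y ∈ CIter E H α, x * y ∈ CIter E H α) ∧
  (∀ x ∈ CIter E H α, x⁻¹ ∈ CIter E H α) ∧
  (∀ δ ≤ α, CIter E H δ ⊆ CIter E H α) ∧
  (∀ c ∈ CIter E H α, ∀ δ < α, ∀ a : G, a ∈ CIter E H δ ↔ c * a * c⁻¹ ∈ CIter E H δ) ∧
  (∀ c ∈ CIter E H α, ∀ h ∈ H, pcomm c h ∈ CIter E H α)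

lemma cprops {E : Set G} (hE : IsSubgroupSet E) (H : Set G) : ∀ α : Ordinal, CProps E H α := by
  intro α
  induction α using Ordinal.induction with
  | _ α IH =>
    have selfconj : ∀ δ, CProps E H δ → ∀ c ∈ CIter E H δ, ∀ a : G,
        (a ∈ CIter E H δ ↔ c * a * c⁻¹ ∈ CIter E H δ) := by
      intro δ hδ c hc a
      constructor
      · intro ha; exact hδ.2.2.1 _ (hδ.2.2.1 c hc a ha) _ (hδ.2.2.2.1 c hc)
      · intro ha
        have := hδ.2.2.1 _ (hδ.2.2.1 _ (hδ.2.2.2.1 c hc) _ ha) c hc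
        simpa [mul_assoc] using this
    rcases Ordinal.zero_or_succ_or_isSuccLimit α with rfl | ⟨β, rfl⟩ | hl
    · refine ⟨?_, ?_, ?_, ?_, ?_, ?_, ?_⟩
      · rw [CIter_zero]; rfl
      · rw [CIter_zero]; intro x hx; rw [hx]; exact hE.one
      · simp only [CIter_zero, Set.mem_singleton_iff]; rintro x rfl y rfl; simp
      · simp only [CIter_zero, Set.mem_singleton_iff]; rintro x rfl; simp
      · intro δ hδ
        have : δ = 0 := le_antisymm hδ (zero_le (a := δ))
        rw [this]
      · simp only [CIter_zero, Set.mem_singleton_iff]; rintro c rfl δ hδ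
        exact absurd hδ (zero_le (a := δ)).not_gt
      · simp only [CIter_zero, Set.mem_singleton_iff]; rintro c rfl h hh
        rw [pcomm_one_left]
    · rw [← Ordinal.add_one_eq_succ]
      have IHβ : CProps E H β := IH β (Order.lt_succ β)
      have hlt : β < β + 1 := by rw [Ordinal.add_one_eq_succ]; exact Order.lt_succ β
      have lt_iff : ∀ δ : Ordinal, δ < β + 1 ↔ δ ≤ β := by
        intro δ; rw [Ordinal.add_one_eq_succ]; exact Order.lt_succ_iff
      have mono : ∀ δ ≤ β + 1, CIter E H δ ⊆ CIter E H (β+1) := by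
        intro δ hδ
        rcases eq_or_lt_of_le hδ with rfl | hδ'
        · exact le_refl _
        · have hδβ : δ ≤ β := (lt_iff δ).mp hδ'
          intro c hc
          have hcβ : c ∈ CIter E H β := IHβ.2.2.2.2.1 δ hδβ hc
          rw [CIter_succ]
          refine ⟨IHβ.2.1 hcβ, ?_, IHβ.2.2.2.2.2.2 c hcβ⟩
          intro δ' hδ' a
          rcases eq_or_lt_of_le ((lt_iff δ').mp hδ') with rfl | hδ''
          · exact selfconj δ' IHβ c hcβ a
          · exact IHβ.2.2.2.2.2.1 c hcβ δ' hδ'' a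
      have h1 : 1 ∈ CIter E H (β + 1) := by
        rw [CIter_succ]
        refine ⟨hE.one, ?_, ?_⟩
        · intro δ hδ a; simp
        · intro h hh; rw [pcomm_one_left]; exact IHβ.1
      have hsub : CIter E H (β+1) ⊆ E := by
        intro x hx; rw [CIter_succ] at hx; exact hx.1
      have hmul : ∀ x ∈ CIter E H (β+1), ∀ y ∈ CIter E H (β+1), x * y ∈ CIter E H (β+1) := by
        intro x hx y hy
        rw [CIter_succ] at hx hy ⊢
        obtain ⟨hxE, hxn, hxc⟩ := hx
        obtain ⟨hyE, hyn, hyc⟩ := hy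
        refine ⟨hE.mul hxE hyE, ?_, ?_⟩
        · intro δ hδ a
          have e : (x*y)*a*(x*y)⁻¹ = x*(y*a*y⁻¹)*x⁻¹ := by group
          rw [e, ← hxn δ hδ (y*a*y⁻¹), ← hyn δ hδ a]
        · intro h hh
          rw [pcomm_mul_left]
          have h1 : pcomm x h ∈ CIter E H β := hxc h hh
          have h2 : y⁻¹ * pcomm x h * y ∈ CIter E H β := by
            apply (hyn β hlt (y⁻¹ * pcomm x h * y)).mpr
            have e : y * (y⁻¹ * pcomm x h * y) * y⁻¹ = pcomm x h := by group
            rw [e]; exact h1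
          exact IHβ.2.2.1 _ h2 _ (hyc h hh)
      have hinv : ∀ x ∈ CIter E H (β+1), x⁻¹ ∈ CIter E H (β+1) := by
        intro x hx
        rw [CIter_succ] at hx ⊢
        obtain ⟨hxE, hxn, hxc⟩ := hx
        refine ⟨hE.inv hxE, ?_, ?_⟩
        · intro δ hδ a
          have h1 := hxn δ hδ (x⁻¹ * a * x)
          have e : x * (x⁻¹ * a * x) * x⁻¹ = a := by group
          rw [e] at h1
          have e2 : x⁻¹ * a * x⁻¹⁻¹ = x⁻¹ * a * x := by group
          rw [e2]
          exact h1.symm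
        · intro h hh
          rw [pcomm_inv_left]
          apply IHβ.2.2.2.1
          exact (hxn β hlt (pcomm x h)).mp (hxc h hh)
      refine ⟨h1, hsub, hmul, hinv, mono, ?_, ?_⟩
      · intro c hc δ hδ a
        rw [CIter_succ] at hc
        exact hc.2.1 δ hδ a
      · intro c hc h hh
        rw [CIter_succ] at hc
        exact mono β hlt.le (hc.2.2 h hh)
    · -- limit case
      have hun := CIter_limit E H hl
      refine ⟨?_, ?_, ?_, ?_, ?_, ?_, ?_⟩
      · rw [hun]; simp only [Set.mem_iUnion]
        exact ⟨0, hl.pos, by rw [CIter_zero]; rfl⟩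
      · rw [hun]; intro x hx
        simp only [Set.mem_iUnion] at hx
        obtain ⟨β, hβ, hx⟩ := hx
        exact (IH β hβ).2.1 hx
      · intro x hx y hy
        rw [hun] at hx hy ⊢
        simp only [Set.mem_iUnion] at hx hy ⊢
        obtain ⟨β1, hβ1, hx⟩ := hx
        obtain ⟨β2, hβ2, hy⟩ := hy
        refine ⟨max β1 β2, max_lt hβ1 hβ2, ?_⟩
        have hx' := (IH _ (max_lt hβ1 hβ2)).2.2.2.2.1 β1 (le_max_left _ _) hx
        have hy' := (IH _ (max_lt hβ1 hβ2)).2.2.2.2.1 β2 (le_max_right _ _) hy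
        exact (IH _ (max_lt hβ1 hβ2)).2.2.1 _ hx' _ hy'
      · intro x hx
        rw [hun] at hx ⊢
        simp only [Set.mem_iUnion] at hx ⊢
        obtain ⟨β, hβ, hx⟩ := hx
        exact ⟨β, hβ, (IH β hβ).2.2.2.1 x hx⟩
      · intro δ hδ
        rcases eq_or_lt_of_le hδ with rfl | hδ'
        · exact le_refl _
        · intro c hc; rw [hun]; simp only [Set.mem_iUnion]; exact ⟨δ, hδ', hc⟩
      · intro c hc δ hδ a
        rw [hun] at hc
        simp only [Set.mem_iUnion] at hc
        obtain ⟨β, hβ, hc⟩ := hc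
        rcases lt_or_ge δ β with h' | h'
        · exact (IH β hβ).2.2.2.2.2.1 c hc δ h' a
        · have hcδ : c ∈ CIter E H δ := (IH δ hδ).2.2.2.2.1 β h' hc
          exact selfconj δ (IH δ hδ) c hcδ a
      · intro c hc h hh
        rw [hun] at hc ⊢
        simp only [Set.mem_iUnion] at hc ⊢
        obtain ⟨β, hβ, hc⟩ := hc
        exact ⟨β, hβ, (IH β hβ).2.2.2.2.2.2 c hc h hh⟩
end CProps

section Grand
variable {G : Type*} [Group G]

lemma env_mono (H : Set G) : ∀ lam : Ordinal, ∀ γ ≤ lam, Env H lam ⊆ Env H γ := by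
  intro lam
  induction lam using Ordinal.induction with
  | _ lam IH =>
    rcases Ordinal.zero_or_succ_or_isSuccLimit lam with rfl | ⟨β, rfl⟩ | hl
    · intro γ hγ
      have : γ = 0 := le_antisymm hγ (zero_le (a := γ))
      rw [this]
    · rw [← Ordinal.add_one_eq_succ]
      intro γ hγ
      rcases eq_or_lt_of_le hγ with rfl | hγ'
      · exact le_refl _
      · have hγβ : γ ≤ β := by
          rw [Ordinal.add_one_eq_succ] at hγ'; exact Order.lt_succ_iff.mp hγ'
        have step : Env H (β+1) ⊆ Env H β := by
          rw [Env_succ]; intro x hx; exact hx.1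
        exact step.trans (IH β (Order.lt_succ β) γ hγβ)
    · intro γ hγ
      rcases eq_or_lt_of_le hγ with rfl | hγ'
      · exact le_refl _
      · rw [Env_limit H hl]
        intro x hx
        simp only [Set.mem_iInter] at hx
        exact hx γ hγ'

def Theta (H : Set G) (lam : Ordinal) : Prop :=
  IsSubgroupSet (Env H lam) ∧
  H ⊆ Env H lam ∧
  (∀ γ ≤ lam, ∀ α, α ≤ γ + 1 → α ≤ lam →
      CIter (Env H lam) H α = CIter (Env H γ) H α ∩ Env H lam) ∧
  (∀ α ≤ lam, CIter (Env H lam) H α = ZSet (Env H lam) α)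

lemma grand (H : Set G) : ∀ lam : Ordinal, Theta H lam := by
  intro lam
  induction lam using Ordinal.induction with
  | _ lam IH =>
    -- (b) subgroup property
    have hb : IsSubgroupSet (Env H lam) := by
      rcases Ordinal.zero_or_succ_or_isSuccLimit lam with rfl | ⟨β, rfl⟩ | hl
      · rw [Env_zero]; exact ⟨trivial, fun _ _ => trivial, fun _ => trivial⟩
      · rw [← Ordinal.add_one_eq_succ]
        obtain ⟨hEβ, hHβ, hdβ, heβ⟩ := IH β (Order.lt_succ β)
        have hz : CIter (Env H β) H β = ZSet (Env H β) β := heβ β (le_refl β)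
        have hcp := cprops hEβ H
        constructor
        · rw [Env_succ]
          exact ⟨hEβ.one, fun c hc => by rw [pcomm_one_left]; exact (hcp β).1⟩
        · intro a b ha hb
          rw [Env_succ] at ha hb ⊢
          refine ⟨hEβ.mul ha.1 hb.1, ?_⟩
          intro c hc
          rw [pcomm_mul_left]
          have h1 : pcomm a c ∈ CIter (Env H β) H β := ha.2 c hc
          have h2 : b⁻¹ * pcomm a c * b ∈ CIter (Env H β) H β := by
            rw [hz] at h1 ⊢
            have := (zset_conj hEβ β (hEβ.inv hb.1) (pcomm a c)).mp h1
            simpa [mul_assoc] using this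
          exact (hcp β).2.2.1 _ h2 _ (hb.2 c hc)
        · intro a ha
          rw [Env_succ] at ha ⊢
          refine ⟨hEβ.inv ha.1, ?_⟩
          intro c hc
          rw [pcomm_inv_left]
          apply (hcp β).2.2.2.1
          have h1 : pcomm a c ∈ CIter (Env H β) H β := ha.2 c hc
          rw [hz] at h1 ⊢
          exact (zset_conj hEβ β ha.1 (pcomm a c)).mp h1
      · rw [Env_limit H hl]
        constructor
        · simp only [Set.mem_iInter]; intro β hβ; exact (IH β hβ).1.one
        · intro a b ha hb
          simp only [Set.mem_iInter] at *
          intro β hβ; exact (IH β hβ).1.mul (ha β hβ) (hb β hβ)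
        · intro a ha
          simp only [Set.mem_iInter] at *
          intro β hβ; exact (IH β hβ).1.inv (ha β hβ)
    -- (c) H ⊆ E lam
    have hc : H ⊆ Env H lam := by
      rcases Ordinal.zero_or_succ_or_isSuccLimit lam with rfl | ⟨β, rfl⟩ | hl
      · rw [Env_zero]; exact fun _ _ => trivial
      · rw [← Ordinal.add_one_eq_succ]
        obtain ⟨hEβ, hHβ, hdβ, heβ⟩ := IH β (Order.lt_succ β)
        have hcp := cprops hEβ H
        intro h hh
        rw [Env_succ]
        refine ⟨hHβ hh, ?_⟩
        intro c hcmem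
        rw [CIter_succ] at hcmem
        have h1 : pcomm c h ∈ CIter (Env H β) H β := hcmem.2.2 h hh
        rw [pcomm_inv_pair]
        exact (hcp β).2.2.2.1 _ h1
      · rw [Env_limit H hl]
        intro h hh
        simp only [Set.mem_iInter]
        intro β hβ; exact (IH β hβ).2.1 hh
    -- (d) compatibility
    have hd : ∀ γ ≤ lam, ∀ α, α ≤ γ + 1 → α ≤ lam →
        CIter (Env H lam) H α = CIter (Env H γ) H α ∩ Env H lam := by
      intro γ hγ
      rcases eq_or_lt_of_le hγ with rfl | hγlt
      · intro α _ _
        exact (Set.inter_eq_left.mpr ((cprops hb H α).2.1)).symm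
      · obtain ⟨hEγ, hHγ, hdγ, heγ⟩ := IH γ hγlt
        intro α
        induction α using Ordinal.induction with
        | _ α IHα =>
          intro hα1 hαlam
          rcases Ordinal.zero_or_succ_or_isSuccLimit α with rfl | ⟨δ, rfl⟩ | hl
          · rw [CIter_zero, CIter_zero]
            ext x
            simp only [Set.mem_inter_iff, Set.mem_singleton_iff]
            exact ⟨fun h => ⟨h, h ▸ hb.one⟩, fun h => h.1⟩
          · rw [← Ordinal.add_one_eq_succ] at *
            have hδγ : δ ≤ γ := by
              have := Order.succ_le_succ_iff.mp (by
                rwa [Ordinal.add_one_eq_succ, Ordinal.add_one_eq_succ] at hα1)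
              exact this
            have hδlam : δ < lam := lt_of_lt_of_le (by
              rw [Ordinal.add_one_eq_succ]; exact Order.lt_succ δ) hαlam
            have hδ1 : δ ≤ δ + 1 := le_of_lt (by
              rw [Ordinal.add_one_eq_succ]; exact Order.lt_succ δ)
            ext x
            rw [CIter_succ, CIter_succ, Set.mem_inter_iff]
            constructor
            · rintro ⟨hxE, hxn, hxc⟩
              have hxγ : x ∈ Env H γ := env_mono H lam γ hγlt.le hxE
              refine ⟨⟨hxγ, ?_, ?_⟩, hxE⟩
              · -- normalization transfers up to the bigger ambient set
                intro δ' hδ' a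
                have hδ'δ : δ' ≤ δ := by
                  rw [Ordinal.add_one_eq_succ] at hδ'; exact Order.lt_succ_iff.mp hδ'
                have hδ'γ : δ' ≤ γ := hδ'δ.trans hδγ
                have hδ'lam : δ' < lam := lt_of_le_of_lt hδ'δ hδlam
                obtain ⟨hEδ', hHδ', hdδ', heδ'⟩ := IH δ' hδ'lam
                have key : CIter (Env H γ) H δ' = ZSet (Env H δ') δ' ∩ Env H γ := by
                  rw [hdγ δ' hδ'γ δ' (le_of_lt (by rw [Ordinal.add_one_eq_succ]; exact Order.lt_succ δ')) hδ'γ,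
                    heδ' δ' (le_refl _)]
                rw [key]
                have hxδ' : x ∈ Env H δ' := env_mono H lam δ' hδ'lam.le hxE
                simp only [Set.mem_inter_iff]
                rw [← zset_conj hEδ' δ' hxδ' a, ← hEγ.conj_iff hxγ a]
              · intro h hh
                have := hxc h hh
                rw [IHα δ (by rw [Ordinal.add_one_eq_succ]; exact Order.lt_succ δ)
                  (hδγ.trans (le_of_lt (by rw [Ordinal.add_one_eq_succ]; exact Order.lt_succ γ)))
                  hδlam.le] at this
                exact this.1
            · rintro ⟨⟨hxγ, hxn, hxc⟩, hxE⟩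
              refine ⟨hxE, ?_, ?_⟩
              · intro δ' hδ' a
                have hδ'δ : δ' ≤ δ := by
                  rw [Ordinal.add_one_eq_succ] at hδ'; exact Order.lt_succ_iff.mp hδ'
                rw [IHα δ' (lt_of_le_of_lt hδ'δ (by rw [Ordinal.add_one_eq_succ]; exact Order.lt_succ δ))
                  (hδ'δ.trans (hδγ.trans (le_of_lt (by rw [Ordinal.add_one_eq_succ]; exact Order.lt_succ γ)))) (le_of_lt (lt_of_le_of_lt hδ'δ hδlam))]
                simp only [Set.mem_inter_iff]
                rw [← hxn δ' hδ' a, ← hb.conj_iff hxE a]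
              · intro h hh
                rw [IHα δ (by rw [Ordinal.add_one_eq_succ]; exact Order.lt_succ δ)
                  (hδγ.trans (le_of_lt (by rw [Ordinal.add_one_eq_succ]; exact Order.lt_succ γ))) hδlam.le]
                exact ⟨hxc h hh, hb.pcomm_mem hxE (hc hh)⟩
          · rw [CIter_limit _ _ hl, CIter_limit _ _ hl, Set.iUnion_inter]
            apply Set.iUnion_congr
            intro β
            rw [Set.iUnion_inter]
            ext x
            simp only [Set.mem_iUnion, Set.mem_inter_iff]
            constructor
            · rintro ⟨hβ, hx⟩
              have := IHα β hβ (le_of_lt (lt_of_lt_of_le hβ hα1)) (le_of_lt (lt_of_lt_of_le hβ hαlam))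
              rw [this] at hx
              exact ⟨hβ, hx⟩
            · rintro ⟨hβ, hx⟩
              have := IHα β hβ (le_of_lt (lt_of_lt_of_le hβ hα1)) (le_of_lt (lt_of_lt_of_le hβ hαlam))
              rw [this]
              exact ⟨hβ, hx⟩
    -- (e) the main statement
    have he : ∀ α ≤ lam, CIter (Env H lam) H α = ZSet (Env H lam) α := by
      intro α
      induction α using Ordinal.induction with
      | _ α IHα =>
        intro hαlam
        rcases Ordinal.zero_or_succ_or_isSuccLimit α with rfl | ⟨δ, rfl⟩ | hl
        · rw [CIter_zero, ZSet_zero]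
        · rw [← Ordinal.add_one_eq_succ] at *
          have hδlt : δ < δ + 1 := by rw [Ordinal.add_one_eq_succ]; exact Order.lt_succ δ
          have hδlam : δ < lam := lt_of_lt_of_le hδlt hαlam
          obtain ⟨hEδ, hHδ, hdδ, heδ⟩ := IH δ hδlam
          have hcpδ := cprops hEδ H
          ext x
          rw [CIter_succ, ZSet_succ]
          constructor
          · rintro ⟨hxE, hxn, hxc⟩
            refine ⟨hxE, ?_⟩
            intro g hg
            -- use the envelope property of g at level δ+1
            have hx' : x ∈ CIter (Env H δ) H (δ+1) := by
              have hmem : x ∈ CIter (Env H lam) H (δ+1) := by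
                rw [CIter_succ]; exact ⟨hxE, hxn, hxc⟩
              rw [hd δ hδlam.le (δ+1) (le_refl _) hαlam] at hmem
              exact hmem.1
            have hg' : g ∈ Env H (δ+1) := env_mono H lam (δ+1) hαlam hg
            rw [Env_succ] at hg'
            have h1 : pcomm g x ∈ CIter (Env H δ) H δ := hg'.2 x hx'
            have h2 : pcomm x g ∈ CIter (Env H δ) H δ := by
              rw [pcomm_inv_pair]; exact (hcpδ δ).2.2.2.1 _ h1
            have h3 : pcomm x g ∈ CIter (Env H lam) H δ := by
              rw [hd δ hδlam.le δ hδlt.le hδlam.le]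
              exact ⟨h2, hb.pcomm_mem hxE hg⟩
            rw [← IHα δ hδlt hδlam.le]
            exact h3
          · rintro ⟨hxE, hz⟩
            refine ⟨hxE, ?_, ?_⟩
            · intro δ' hδ' a
              rw [IHα δ' hδ' (le_of_lt (lt_of_lt_of_le hδ' hαlam))]
              exact zset_conj hb δ' hxE a
            · intro h hh
              rw [IHα δ hδlt hδlam.le]
              exact hz h (hc hh)
        · rw [CIter_limit _ _ hl, ZSet_limit _ hl]
          apply Set.iUnion_congr
          intro β
          ext x
          simp only [Set.mem_iUnion]
          constructor
          · rintro ⟨hβ, hx⟩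
            rw [IHα β hβ (le_of_lt (lt_of_lt_of_le hβ hαlam))] at hx
            exact ⟨hβ, hx⟩
          · rintro ⟨hβ, hx⟩
            rw [IHα β hβ (le_of_lt (lt_of_lt_of_le hβ hαlam))]
            exact ⟨hβ, hx⟩
    exact ⟨hb, hc, hd, he⟩

end Grand


theorem stmt9 {G : Type*} [Group G] (H : Subgroup G) (lam : Ordinal) :
    ∀ α ≤ lam, CIter (Env (H : Set G) lam) (H : Set G) α = ZSet (Env (H : Set G) lam) α := by
  exact (grand (H : Set G) lam).2.2.2
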